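/- The algebras L⁴₀₇ and L⁴₀₅ over ℂ, given on basis e₁,...,e₄ by (L⁴₀₇): e₁e₁=e₃, e₂e₂=e₃, e₃e₁=e₄, e₃e₂=ie₄ and (L⁴₀₅): e₁e₁=e₃, e₂e₂=e₃, e₃e₁=e₄, are not isomorphic. -/
import Mathlib


open Complex

/-- Multiplication of `L⁴₀₇`: nonzero products `e₁e₁ = e₃`, `e₂e₂ = e₃`,
`e₃e₁ = e₄`, `e₃e₂ = i e₄` (indices `0,…,3`). -/
noncomputable def mulL407 (x y : Fin 4 → ℂ) : Fin 4 → ℂ :=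
  ![0, 0, x 0 * y 0 + x 1 * y 1, x 2 * y 0 + I * (x 2 * y 1)]

/-- Multiplication of `L⁴₀₅`: nonzero products `e₁e₁ = e₃`, `e₂e₂ = e₃`,
`e₃e₁ = e₄` (indices `0,…,3`). -/
def mulL405 (x y : Fin 4 → ℂ) : Fin 4 → ℂ :=
  ![0, 0, x 0 * y 0 + x 1 * y 1, x 2 * y 0]

/-- the algebras `L⁴₀₇` and `L⁴₀₅` are not isomorphic. -/
theorem L407_not_isomorphic_L405 :
    ¬ ∃ φ : (Fin 4 → ℂ) ≃ₗ[ℂ] (Fin 4 → ℂ),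
        ∀ a b : Fin 4 → ℂ, φ (mulL407 a b) = mulL405 (φ a) (φ b) := by
  rintro ⟨φ, h⟩
  set p : Fin 4 → ℂ := φ ![1,0,0,0] with hp
  set q : Fin 4 → ℂ := φ ![0,1,0,0] with hq
  set b : Fin 4 → ℂ := φ ![0,0,1,0] with hb
  set c : Fin 4 → ℂ := φ ![0,0,0,1] with hc
  have m11 : mulL407 ![1,0,0,0] ![1,0,0,0] = ![0,0,1,0] := by
    funext i; fin_cases i <;> simp [mulL407]
  have m22 : mulL407 ![0,1,0,0] ![0,1,0,0] = ![0,0,1,0] := by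
    funext i; fin_cases i <;> simp [mulL407]
  have m31 : mulL407 ![0,0,1,0] ![1,0,0,0] = ![0,0,0,1] := by
    funext i; fin_cases i <;> simp [mulL407]
  have m32 : mulL407 ![0,0,1,0] ![0,1,0,0] = (I : ℂ) • ![0,0,0,1] := by
    funext i; fin_cases i <;> simp [mulL407]
  have m12 : mulL407 ![1,0,0,0] ![0,1,0,0] = 0 := by
    funext i; fin_cases i <;> simp [mulL407]
  have h11 := h ![1,0,0,0] ![1,0,0,0]; rw [m11] at h11
  have h22 := h ![0,1,0,0] ![0,1,0,0]; rw [m22] at h22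
  have h31 := h ![0,0,1,0] ![1,0,0,0]; rw [m31] at h31
  have h32 := h ![0,0,1,0] ![0,1,0,0]; rw [m32, map_smul] at h32
  have h12 := h ![1,0,0,0] ![0,1,0,0]; rw [m12, map_zero] at h12
  rw [← hp, ← hb] at h11
  rw [← hq, ← hb] at h22
  rw [← hp, ← hb, ← hc] at h31
  rw [← hq, ← hb, ← hc] at h32
  rw [← hp, ← hq] at h12
  -- components
  have hA : b 2 = p 0 ^ 2 + p 1 ^ 2 := by
    have := congrFun h11 2; simpa [mulL405, sq] using this
  have hB : b 2 = q 0 ^ 2 + q 1 ^ 2 := by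
    have := congrFun h22 2; simpa [mulL405, sq] using this
  have hb0 : b 0 = 0 := by have := congrFun h11 0; simpa [mulL405] using this
  have hb1 : b 1 = 0 := by have := congrFun h11 1; simpa [mulL405] using this
  have hc0 : c 0 = 0 := by have := congrFun h31 0; simpa [mulL405] using this
  have hc1 : c 1 = 0 := by have := congrFun h31 1; simpa [mulL405] using this
  have hc2 : c 2 = 0 := by
    have := congrFun h31 2; simpa [mulL405, hb0, hb1] using this
  have hc3 : c 3 = b 2 * p 0 := by
    have := congrFun h31 3; simpa [mulL405] using this
  have hIc3 : I * c 3 = b 2 * q 0 := by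
    have := congrFun h32 3; simpa [mulL405] using this
  have hD : (0 : ℂ) = p 0 * q 0 + p 1 * q 1 := by
    have := congrFun h12 2; simpa [mulL405] using this
  -- c ≠ 0
  have he4 : (![0,0,0,1] : Fin 4 → ℂ) ≠ 0 := by
    intro h0
    have := congrFun h0 3
    simp at this
  have hcne : c ≠ 0 := by
    intro h0
    exact he4 (φ.map_eq_zero_iff.mp (hc ▸ h0))
  have hc3ne : c 3 ≠ 0 := by
    intro h0
    apply hcne
    funext i
    fin_cases i <;> simp [hc0, hc1, hc2, h0]
  have hb2ne : b 2 ≠ 0 := fun h0 => hc3ne (by rw [hc3, h0, zero_mul])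
  have hC : q 0 = I * p 0 := by
    have : b 2 * q 0 = b 2 * (I * p 0) := by rw [← hIc3, hc3]; ring
    exact mul_left_cancel₀ hb2ne this
  have hE : (I : ℂ) * I = -1 := Complex.I_mul_I
  have key : b 2 ^ 2 = 0 := by
    linear_combination (b 2 + p 0 ^ 2) * hA + p 1 ^ 2 * hB +
      (-2 * p 0 * p 1 * q 1 + p 1 ^ 2 * q 0 + I * p 0 * p 1 ^ 2 - p 0 ^ 2 * q 0 + I * p 0 ^ 3) * hC +
      (-(p 0 * q 0) - p 1 * q 1 + 2 * I * p 0 ^ 2) * hD +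
      (p 0 ^ 2 * p 1 ^ 2 + p 0 ^ 4) * hE
  exact hb2ne (sq_eq_zero_iff.mp key)
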